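/- Let A₁, …, A_m be pairwise commuting real d×d matrices, let ℓ ∈ ℝ^d, and define φ : ℝ^m → ℝ^d by φ(t) = (exp(−Σ_{k=1}^m t_k A_k))ᵀ ℓ. Let Ω ⊂ ℝ^m be measurable with finite positive Lebesgue measure, let Λ ⊂ ℝ^d and Γ ⊂ ℝ^m be countable, and suppose: (a) the restriction of φ to Ω is essentially injective with respect to Lebesgue measure m_Ω on Ω; (b) the pushforward φ_*(m_Ω) is a frame-spectral measure with frame spectrum Λ, i.e. { y ↦ e^{2πi λ·y} : λ ∈ Λ } is a frame for L²(φ_*(m_Ω)); (c) the translates { Ω + γ : γ ∈ Γ } tile ℝ^m. Then the family { s ↦ e^{2πi φ(s−γ)·λ} 1_Ω(s−γ) : λ ∈ Λ, γ ∈ Γ } is a frame for L²(ℝ^m). -/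

import Mathlib

open MeasureTheory Filter Set
open scoped Real ENNReal Topology

noncomputable section

/-- `e2pi t = e^{2π i t}`. -/
def e2pi (t : ℝ) : ℂ := Complex.exp (2 * Real.pi * Complex.I * t)

/-- The Euclidean dot product on `Fin d → ℝ`. -/
def dotp {d : ℕ} (a b : Fin d → ℝ) : ℝ := ∑ i, a i * b i

/-- `φ` is `μ`-essentially injective. -/
def EssInj {α β : Type*} [MeasurableSpace α] [MeasurableSpace β]
    (μ : Measure α) (φ : α → β) : Prop :=
  ∀ f : α → ℂ, MemLp f 2 μ →
    ∃ h : β → ℂ, MemLp h 2 (Measure.map φ μ) ∧ f =ᵐ[μ] fun x => h (φ x)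

/-- The family `E(Λ, φ)` is a frame for `L²(μ)`. -/
def FrameExp {α : Type*} [MeasurableSpace α] {d : ℕ}
    (μ : Measure α) (Λ : Set (Fin d → ℝ)) (φ : α → Fin d → ℝ) : Prop :=
  ∃ A B : ℝ, 0 < A ∧ A ≤ B ∧ ∀ f : α → ℂ, MemLp f 2 μ →
    (A * ∫ x, ‖f x‖ ^ 2 ∂μ) ≤
      (∑' lam : Λ, ‖∫ x, f x * (starRingEnd ℂ) (e2pi (dotp (lam : Fin d → ℝ) (φ x))) ∂μ‖ ^ 2) ∧
    (∑' lam : Λ, ‖∫ x, f x * (starRingEnd ℂ) (e2pi (dotp (lam : Fin d → ℝ) (φ x))) ∂μ‖ ^ 2) ≤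
      B * ∫ x, ‖f x‖ ^ 2 ∂μ

/-- The phase function `φ(t) = (exp(−Σ t_k A_k))ᵀ ℓ`. -/
def liePhase {d m : ℕ} (A : Fin m → Matrix (Fin d) (Fin d) ℝ) (ℓ : Fin d → ℝ)
    (t : Fin m → ℝ) : Fin d → ℝ :=
  (NormedSpace.exp (-(∑ k, t k • A k))).transpose.mulVec ℓ

/-- The generalized Gabor-type system `s ↦ e^{2π i φ(s−γ)·λ} 1_Ω(s−γ)`. -/
def genSys {d m : ℕ} (Ω : Set (Fin m → ℝ)) (φ : (Fin m → ℝ) → Fin d → ℝ)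
    (lam : Fin d → ℝ) (γ : Fin m → ℝ) (s : Fin m → ℝ) : ℂ :=
  e2pi (dotp (φ (s - γ)) lam) * Set.indicator Ω (fun _ => (1 : ℂ)) (s - γ)

-- auxiliary lemmas

lemma dotp_comm' {d : ℕ} (a b : Fin d → ℝ) : dotp a b = dotp b a := by
  unfold dotp; exact Finset.sum_congr rfl fun i _ => mul_comm _ _

lemma continuous_e2pi : Continuous e2pi := by
  unfold e2pi
  exact Complex.continuous_exp.comp (continuous_const.mul Complex.continuous_ofReal)

lemma continuous_dotp_right {d : ℕ} (a : Fin d → ℝ) :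
    Continuous fun y : Fin d → ℝ => dotp a y := by
  unfold dotp
  exact continuous_finset_sum _ fun i _ => continuous_const.mul (continuous_apply i)

attribute [local instance] Matrix.linftyOpNormedRing Matrix.linftyOpNormedAlgebra in
lemma continuous_liePhase {d m : ℕ} (A : Fin m → Matrix (Fin d) (Fin d) ℝ) (ℓ : Fin d → ℝ) :
    Continuous (liePhase A ℓ) := by
  have h1 : Continuous (fun t : Fin m → ℝ => NormedSpace.exp (-(∑ k, t k • A k))) := by
    apply NormedSpace.exp_continuous.comp
    exact (continuous_finset_sum _ fun k _ => (continuous_apply k).smul continuous_const).neg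
  refine continuous_pi fun i => ?_
  simp only [liePhase, Matrix.mulVec, dotProduct, Matrix.transpose_apply]
  exact continuous_finset_sum _ fun j _ => (h1.matrix_elem j i).mul continuous_const

lemma glue {ι κ : Type*} {F : ι → κ → ℝ} {I : κ → ℝ} {A B T : ℝ}
    (hnn : ∀ i k, 0 ≤ F i k) (hI : HasSum I T)
    (hlow : ∀ k, A * I k ≤ ∑' i, F i k) (hup : ∀ k, (∑' i, F i k) ≤ B * I k)
    (hsumm : ∀ k, Summable fun i => F i k) :
    A * T ≤ (∑' i, ∑' k, F i k) ∧ (∑' i, ∑' k, F i k) ≤ B * T := by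
  have hIsum : Summable I := hI.summable
  have htot : ∑' k, I k = T := hI.tsum_eq
  have hSsum : Summable (fun k => ∑' i, F i k) :=
    Summable.of_nonneg_of_le (fun k => tsum_nonneg fun i => hnn i k) hup (hIsum.mul_left B)
  have hprod : Summable (Function.uncurry fun (k : κ) (i : ι) => F i k) := by
    refine (summable_prod_of_nonneg fun p => hnn p.2 p.1).2 ⟨fun k => hsumm k, ?_⟩
    exact hSsum
  have hswap : (∑' i, ∑' k, F i k) = ∑' k, ∑' i, F i k := Summable.tsum_comm hprod
  constructor
  · calc A * T = ∑' k, A * I k := by rw [tsum_mul_left, htot]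
      _ ≤ ∑' k, ∑' i, F i k := Summable.tsum_le_tsum hlow (hIsum.mul_left A) hSsum
      _ = _ := hswap.symm
  · calc (∑' i, ∑' k, F i k) = ∑' k, ∑' i, F i k := hswap
      _ ≤ ∑' k, B * I k := Summable.tsum_le_tsum hup hSsum (hIsum.mul_left B)
      _ = B * T := by rw [tsum_mul_left, htot]

/-- Discretization of a unitary representation, frame version: if
`φ(t) = (exp(−Σ t_k A_k))ᵀ ℓ` (with `A₁,…,A_m` pairwise commuting), `φ` is essentially
injective on `Ω`, the pushforward `φ⋆(m_Ω)` is a frame-spectral measure with frame spectrum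
`Λ`, and the translates `Ω + γ`, `γ ∈ Γ`, tile `ℝ^m`, then
`{ s ↦ e^{2π i φ(s−γ)·λ} 1_Ω(s−γ) : λ ∈ Λ, γ ∈ Γ }` is a frame for `L²(ℝ^m)`. -/
theorem statement19 {d m : ℕ} (A : Fin m → Matrix (Fin d) (Fin d) ℝ)
    (hcomm : ∀ i j, A i * A j = A j * A i) (ℓ : Fin d → ℝ)
    (φ : (Fin m → ℝ) → Fin d → ℝ) (hφ : φ = liePhase A ℓ)
    (Ω : Set (Fin m → ℝ)) (hΩm : MeasurableSet Ω)
    (hΩpos : 0 < volume Ω) (hΩfin : volume Ω < ⊤)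
    (Λ : Set (Fin d → ℝ)) (hΛ : Λ.Countable)
    (Γ : Set (Fin m → ℝ)) (hΓ : Γ.Countable)
    (ha : EssInj (volume.restrict Ω) φ)
    (hb : FrameExp (Measure.map φ (volume.restrict Ω)) Λ id)
    (hc₁ : ∀ γ ∈ Γ, ∀ γ' ∈ Γ, γ ≠ γ' →
      volume (((fun x => x + γ) '' Ω) ∩ ((fun x => x + γ') '' Ω)) = 0)
    (hc₂ : volume (Set.univ \ ⋃ γ ∈ Γ, (fun x => x + γ) '' Ω) = 0) :
    ∃ C D : ℝ, 0 < C ∧ C ≤ D ∧ ∀ f : (Fin m → ℝ) → ℂ, MemLp f 2 volume →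
      (C * ∫ s, ‖f s‖ ^ 2) ≤
        (∑' lam : Λ, ∑' γ : Γ,
          ‖∫ s, f s * (starRingEnd ℂ) (genSys Ω φ (lam : Fin d → ℝ) (γ : Fin m → ℝ) s)‖ ^ 2) ∧
      (∑' lam : Λ, ∑' γ : Γ,
          ‖∫ s, f s * (starRingEnd ℂ) (genSys Ω φ (lam : Fin d → ℝ) (γ : Fin m → ℝ) s)‖ ^ 2) ≤
        D * ∫ s, ‖f s‖ ^ 2 := by
  obtain ⟨A₀, B₀, hA₀, hAB, hframe⟩ := hb
  have hφc : Continuous φ := hφ ▸ continuous_liePhase A ℓ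
  have hφmeas : Measurable φ := hφc.measurable
  have hΓc : Countable ↥Γ := hΓ.to_subtype
  refine ⟨A₀, B₀, hA₀, hAB, fun f hf => ?_⟩
  set ν := Measure.map φ (volume.restrict Ω) with hν
  have hfint : Integrable (fun s => ‖f s‖ ^ 2) volume := by
    have := hf.integrable_norm_rpow (by norm_num) (by norm_num)
    simpa [ENNReal.toReal_ofNat, Real.rpow_natCast] using this
  set I : ↥Γ → ℝ := fun γ => ∫ s in Ω, ‖f (s + (γ : Fin m → ℝ))‖ ^ 2 with hIdef
  -- per-γ estimates
  have key : ∀ γ : ↥Γ,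
      (A₀ * I γ ≤ ∑' lam : ↥Λ,
        ‖∫ s, f s * (starRingEnd ℂ) (genSys Ω φ (lam : Fin d → ℝ) (γ : Fin m → ℝ) s)‖ ^ 2) ∧
      ((∑' lam : ↥Λ,
        ‖∫ s, f s * (starRingEnd ℂ) (genSys Ω φ (lam : Fin d → ℝ) (γ : Fin m → ℝ) s)‖ ^ 2)
          ≤ B₀ * I γ) ∧
      Summable (fun lam : ↥Λ =>
        ‖∫ s, f s * (starRingEnd ℂ) (genSys Ω φ (lam : Fin d → ℝ) (γ : Fin m → ℝ) s)‖ ^ 2) := by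
    intro γ
    set g : (Fin m → ℝ) → ℂ := fun u => f (u + (γ : Fin m → ℝ)) with hg
    have hgmem : MemLp g 2 (volume.restrict Ω) :=
      (hf.comp_measurePreserving (measurePreserving_add_right volume _)).restrict Ω
    obtain ⟨h, hhmem, hhae⟩ := ha g hgmem
    have hcoeff : ∀ lam : ↥Λ,
        (∫ s, f s * (starRingEnd ℂ) (genSys Ω φ (lam : Fin d → ℝ) (γ : Fin m → ℝ) s))
        = ∫ x, h x * (starRingEnd ℂ) (e2pi (dotp (lam : Fin d → ℝ) (id x))) ∂ν := by
      intro lam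
      have hsm : AEStronglyMeasurable
          (fun x => h x * (starRingEnd ℂ) (e2pi (dotp (lam : Fin d → ℝ) (id x)))) ν := by
        refine hhmem.aestronglyMeasurable.mul ?_
        exact (Complex.continuous_conj.comp
          ((continuous_e2pi.comp (continuous_dotp_right _)).comp continuous_id)).aestronglyMeasurable
      have e1 : (∫ s, f s * (starRingEnd ℂ) (genSys Ω φ (lam : Fin d → ℝ) (γ : Fin m → ℝ) s))
          = ∫ s, f (s + (γ : Fin m → ℝ)) *
              (starRingEnd ℂ) (genSys Ω φ (lam : Fin d → ℝ) (γ : Fin m → ℝ) (s + (γ : Fin m → ℝ))) :=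
        (integral_add_right_eq_self
          (fun s => f s * (starRingEnd ℂ) (genSys Ω φ (lam : Fin d → ℝ) (γ : Fin m → ℝ) s)) _).symm
      have e2 : ∀ s, f (s + (γ : Fin m → ℝ)) *
            (starRingEnd ℂ) (genSys Ω φ (lam : Fin d → ℝ) (γ : Fin m → ℝ) (s + (γ : Fin m → ℝ)))
          = Set.indicator Ω
              (fun u => g u * (starRingEnd ℂ) (e2pi (dotp (lam : Fin d → ℝ) (φ u)))) s := by
        intro s
        have hsg : (s + (γ : Fin m → ℝ)) - (γ : Fin m → ℝ) = s := add_sub_cancel_right s _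
        by_cases hs : s ∈ Ω
        · simp only [genSys, hsg, Set.indicator_of_mem hs, hg, mul_one,
            dotp_comm' (φ s) (lam : Fin d → ℝ)]
        · simp [genSys, hsg, Set.indicator_of_notMem hs]
      calc (∫ s, f s * (starRingEnd ℂ) (genSys Ω φ (lam : Fin d → ℝ) (γ : Fin m → ℝ) s))
          = ∫ s, Set.indicator Ω
              (fun u => g u * (starRingEnd ℂ) (e2pi (dotp (lam : Fin d → ℝ) (φ u)))) s := by
            rw [e1]; exact integral_congr_ae (Eventually.of_forall e2)
        _ = ∫ u in Ω, g u * (starRingEnd ℂ) (e2pi (dotp (lam : Fin d → ℝ) (φ u))) :=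
            integral_indicator hΩm
        _ = ∫ u in Ω, h (φ u) * (starRingEnd ℂ) (e2pi (dotp (lam : Fin d → ℝ) (φ u))) :=
            integral_congr_ae (hhae.mul (Filter.EventuallyEq.refl _ _))
        _ = ∫ x, h x * (starRingEnd ℂ) (e2pi (dotp (lam : Fin d → ℝ) (id x))) ∂ν := by
            rw [integral_map hφmeas.aemeasurable hsm]
            simp only [id_eq]
    have hnsm : AEStronglyMeasurable (fun x => ‖h x‖ ^ 2) ν := by
      have h1 := hhmem.aestronglyMeasurable.norm
      exact (h1.mul h1).congr (Eventually.of_forall fun x => (sq ‖h x‖ ▸ rfl : ‖h x‖ * ‖h x‖ = ‖h x‖ ^ 2))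
    have hIγ : I γ = ∫ x, ‖h x‖ ^ 2 ∂ν := by
      have hae2 : (fun u => ‖f (u + (γ : Fin m → ℝ))‖ ^ 2) =ᵐ[volume.restrict Ω]
          fun u => ‖h (φ u)‖ ^ 2 := by
        filter_upwards [hhae] with u hu
        rw [hg] at hu
        simp only [hu]
      calc I γ = ∫ u in Ω, ‖h (φ u)‖ ^ 2 := integral_congr_ae hae2
        _ = ∫ x, ‖h x‖ ^ 2 ∂ν := (integral_map hφmeas.aemeasurable hnsm).symm
    have hfr := hframe h hhmem
    have hts : (∑' lam : ↥Λ,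
        ‖∫ s, f s * (starRingEnd ℂ) (genSys Ω φ (lam : Fin d → ℝ) (γ : Fin m → ℝ) s)‖ ^ 2)
        = ∑' lam : ↥Λ,
          ‖∫ x, h x * (starRingEnd ℂ) (e2pi (dotp (lam : Fin d → ℝ) (id x))) ∂ν‖ ^ 2 :=
      tsum_congr fun lam => by rw [hcoeff lam]
    refine ⟨by rw [hts, hIγ]; exact hfr.1, by rw [hts, hIγ]; exact hfr.2, ?_⟩
    by_contra hns
    have h0 := tsum_eq_zero_of_not_summable hns
    have h1 := hfr.1
    rw [← hts, h0] at h1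
    have h2 : (0:ℝ) ≤ ∫ x, ‖h x‖ ^ 2 ∂ν := integral_nonneg fun x => sq_nonneg _
    have hI0 : ∫ x, ‖h x‖ ^ 2 ∂ν = 0 := by nlinarith
    have hint : Integrable (fun x => ‖h x‖ ^ 2) ν := by
      have := hhmem.integrable_norm_rpow (by norm_num) (by norm_num)
      simpa [ENNReal.toReal_ofNat, Real.rpow_natCast] using this
    have hh0 : h =ᵐ[ν] 0 := by
      have := (integral_eq_zero_iff_of_nonneg (fun x => sq_nonneg ‖h x‖) hint).1 hI0
      filter_upwards [this] with x hx
      have hx' : ‖h x‖ ^ 2 = 0 := hx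
      have : ‖h x‖ = 0 := by nlinarith [norm_nonneg (h x)]
      simpa using this
    apply hns
    have hz : ∀ lam : ↥Λ,
        ‖∫ s, f s * (starRingEnd ℂ) (genSys Ω φ (lam : Fin d → ℝ) (γ : Fin m → ℝ) s)‖ ^ 2 = 0 := by
      intro lam
      rw [hcoeff lam]
      have : (∫ x, h x * (starRingEnd ℂ) (e2pi (dotp (lam : Fin d → ℝ) (id x))) ∂ν) = 0 := by
        rw [integral_congr_ae (show _ =ᵐ[ν] (fun _ => (0:ℂ)) from by
          filter_upwards [hh0] with x hx; simp [hx])]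
        exact integral_zero _ _
      simp only [id_eq] at this
      simp [this]
    exact (summable_congr fun lam => (hz lam)).2 summable_zero
  -- tiling
  set S : ↥Γ → Set (Fin m → ℝ) := fun γ => (fun x => x - (γ : Fin m → ℝ)) ⁻¹' Ω with hSdef
  have himg : ∀ γ : Fin m → ℝ, (fun x => x + γ) '' Ω = (fun x => x - γ) ⁻¹' Ω := by
    intro γ; ext x
    constructor
    · rintro ⟨a, ha', rfl⟩; simpa [add_sub_cancel_right] using ha'
    · intro hx; exact ⟨x - γ, hx, sub_add_cancel x γ⟩
  have hSmeas : ∀ γ : ↥Γ, MeasurableSet (S γ) :=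
    fun γ => (measurable_id.sub measurable_const) hΩm
  have hdisj : Pairwise (Function.onFun (AEDisjoint volume) S) := by
    intro γ γ' hne
    have hne' : (γ : Fin m → ℝ) ≠ (γ' : Fin m → ℝ) := fun hh => hne (Subtype.ext hh)
    have := hc₁ _ γ.2 _ γ'.2 hne'
    rw [himg, himg] at this
    exact this
  have hsum : HasSum I (∫ s, ‖f s‖ ^ 2) := by
    have h1 : HasSum (fun γ : ↥Γ => ∫ s in S γ, ‖f s‖ ^ 2)
        (∫ s in ⋃ γ : ↥Γ, S γ, ‖f s‖ ^ 2) :=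
      hasSum_integral_iUnion_ae (fun γ => (hSmeas γ).nullMeasurableSet) hdisj
        hfint.integrableOn
    have h2 : (fun γ : ↥Γ => ∫ s in S γ, ‖f s‖ ^ 2) = I := by
      funext γ
      have := (measurePreserving_sub_right volume (γ : Fin m → ℝ)).setIntegral_preimage_emb
        (MeasurableEquiv.subRight (γ : Fin m → ℝ)).measurableEmbedding
        (fun u => ‖f (u + (γ : Fin m → ℝ))‖ ^ 2) Ω
      simp only [sub_add_cancel] at this
      exact this
    have h3 : (∫ s in ⋃ γ : ↥Γ, S γ, ‖f s‖ ^ 2) = ∫ s, ‖f s‖ ^ 2 := by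
      have hUeq : (⋃ γ ∈ Γ, (fun x => x + γ) '' Ω) = ⋃ γ : ↥Γ, S γ := by
        rw [Set.biUnion_eq_iUnion]
        exact Set.iUnion_congr fun γ => himg (γ : Fin m → ℝ)
      have hcov : (⋃ γ : ↥Γ, S γ) =ᵐ[volume] Set.univ := by
        rw [MeasureTheory.ae_eq_univ, Set.compl_eq_univ_diff, ← hUeq]
        exact hc₂
      rw [setIntegral_congr_set hcov, setIntegral_univ]
    rw [← h3, ← h2]
    exact h1
  exact glue (fun lam γ => sq_nonneg _) hsum (fun γ => (key γ).1) (fun γ => (key γ).2.1)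
    (fun γ => (key γ).2.2)
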